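/- arXiv:2602.07607 — 2 statements merged into one kernel-verified Lean document; each statement's English description precedes it below -/
import Mathlib

section
/- For every k-regular finite simple graph G with k ≥ 1, there exists an edge labeling φ : E(G) → Fin (2k(k−1)+1) such that any two distinct edges lying on a common path of length at most 3 in G receive distinct labels. -/
open Finset

section Greedy
variable {α : Type*} [Fintype α]

open Classical in
noncomputable def greedy (H : SimpleGraph α) (M : ℕ) (σ : α → ℕ) (a : α) : Fin (M+1) :=
  if h : ((Finset.univ : Finset (Fin (M+1))) \
      ((Finset.univ.filter (fun b => H.Adj a b ∧ σ b < σ a)).attach.image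
        (fun b => greedy H M σ b.1))).Nonempty then h.choose else ⟨0, Nat.succ_pos M⟩
termination_by σ a
decreasing_by
  all_goals exact (Finset.mem_filter.1 b.2).2.2

open Classical in
lemma greedy_not_mem (H : SimpleGraph α) (M : ℕ) (σ : α → ℕ) (a : α)
    (hdeg : (Finset.univ.filter (fun b => H.Adj a b)).card ≤ M) :
    greedy H M σ a ∉ ((Finset.univ.filter (fun b => H.Adj a b ∧ σ b < σ a)).attach.image
        (fun b => greedy H M σ b.1)) := by
  rw [greedy]
  set U := ((Finset.univ.filter (fun b => H.Adj a b ∧ σ b < σ a)).attach.image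
        (fun b => greedy H M σ b.1)) with hU
  have hne : ((Finset.univ : Finset (Fin (M+1))) \ U).Nonempty := by
    rw [Finset.sdiff_nonempty]
    intro hsub
    have h1 : (Finset.univ : Finset (Fin (M+1))).card ≤ U.card := Finset.card_le_card hsub
    have h2 : U.card ≤ M := by
      calc U.card ≤ (Finset.univ.filter (fun b => H.Adj a b ∧ σ b < σ a)).attach.card :=
            Finset.card_image_le
        _ = (Finset.univ.filter (fun b => H.Adj a b ∧ σ b < σ a)).card := Finset.card_attach
        _ ≤ (Finset.univ.filter (fun b => H.Adj a b)).card :=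
            Finset.card_le_card (Finset.monotone_filter_right _ (fun x _ hx => hx.1))
        _ ≤ M := hdeg
    simp [Finset.card_univ] at h1
    omega
  rw [dif_pos hne]
  exact (Finset.mem_sdiff.1 hne.choose_spec).2

open Classical in
lemma greedy_valid (H : SimpleGraph α) (M : ℕ) (σ : α → ℕ) (hσ : Function.Injective σ)
    (hdeg : ∀ a, (Finset.univ.filter (fun b => H.Adj a b)).card ≤ M) :
    ∀ a b, H.Adj a b → greedy H M σ a ≠ greedy H M σ b := by
  classical
  have key : ∀ a b, H.Adj a b → σ b < σ a → greedy H M σ a ≠ greedy H M σ b := by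
    intro a b hab hlt heq
    apply greedy_not_mem H M σ a (hdeg a)
    rw [heq]
    exact Finset.mem_image.2 ⟨⟨b, by simp [hab, hlt]⟩, Finset.mem_attach _ _, rfl⟩
  intro a b hab
  rcases lt_trichotomy (σ a) (σ b) with h | h | h
  · exact (key b a hab.symm h).symm
  · exact absurd (hσ h) (H.ne_of_adj hab)
  · exact key a b hab h

end Greedy

section Conflict
variable {V : Type*}

def conflictGraph (G : SimpleGraph V) : SimpleGraph (Sym2 V) where
  Adj e f := e ∈ G.edgeSet ∧ f ∈ G.edgeSet ∧ e ≠ f ∧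
    ∃ a b, a ∈ e ∧ b ∈ f ∧ (a = b ∨ G.Adj a b)
  symm := ⟨by
    rintro e f ⟨he, hf, hne, a, b, ha, hb, hab⟩
    refine ⟨hf, he, hne.symm, b, a, hb, ha, ?_⟩
    rcases hab with rfl | h
    · exact Or.inl rfl
    · exact Or.inr h.symm⟩
  loopless := ⟨fun e h => h.2.2.1 rfl⟩

lemma edge_endpoint (G : SimpleGraph V) {f : Sym2 V} {x : V}
    (hf : f ∈ G.edgeSet) (hx : x ∈ f) : ∃ w, G.Adj x w ∧ f = s(x, w) := by
  induction f with
  | _ c d =>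
    rw [Sym2.mem_iff] at hx
    rcases hx with rfl | rfl
    · exact ⟨d, hf, rfl⟩
    · exact ⟨c, ((SimpleGraph.mem_edgeSet G).1 hf).symm, Sym2.eq_swap⟩

lemma conflict_of_path (G : SimpleGraph V) {u v : V} (p : G.Walk u v) (hlen : p.length ≤ 3)
    {e f : Sym2 V} (he : e ∈ p.edges) (hf : f ∈ p.edges) (hne : e ≠ f) :
    ∃ a b, a ∈ e ∧ b ∈ f ∧ (a = b ∨ G.Adj a b) := by
  match p with
  | .nil => simp at he
  | .cons h .nil =>
    simp only [SimpleGraph.Walk.edges_cons, SimpleGraph.Walk.edges_nil,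
      List.mem_cons, List.not_mem_nil, or_false] at he hf
    exact absurd (he.trans hf.symm) hne
  | .cons (v := x) h (.cons (v := y) h2 .nil) =>
    simp only [SimpleGraph.Walk.edges_cons, SimpleGraph.Walk.edges_nil,
      List.mem_cons, List.not_mem_nil, or_false] at he hf
    rcases he with rfl | rfl <;> rcases hf with rfl | rfl
    · exact absurd rfl hne
    · exact ⟨x, x, by simp, by simp, Or.inl rfl⟩
    · exact ⟨x, x, by simp, by simp, Or.inl rfl⟩
    · exact absurd rfl hne
  | .cons (v := x) h (.cons (v := y) h2 (.cons (v := z) h3 .nil)) =>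
    simp only [SimpleGraph.Walk.edges_cons, SimpleGraph.Walk.edges_nil,
      List.mem_cons, List.not_mem_nil, or_false] at he hf
    rcases he with rfl | rfl | rfl <;> rcases hf with rfl | rfl | rfl
    · exact absurd rfl hne
    · exact ⟨x, x, by simp, by simp, Or.inl rfl⟩
    · exact ⟨x, y, by simp, by simp, Or.inr h2⟩
    · exact ⟨x, x, by simp, by simp, Or.inl rfl⟩
    · exact absurd rfl hne
    · exact ⟨y, y, by simp, by simp, Or.inl rfl⟩
    · exact ⟨y, x, by simp, by simp, Or.inr h2.symm⟩
    · exact ⟨y, y, by simp, by simp, Or.inl rfl⟩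
    · exact absurd rfl hne
  | .cons _ (.cons _ (.cons _ (.cons _ q))) =>
    simp only [SimpleGraph.Walk.length_cons] at hlen
    omega

end Conflict

open Classical in
lemma conflict_degree_le {V : Type*} [Fintype V] (G : SimpleGraph V) [DecidableRel G.Adj]
    {k : ℕ} (hk : 1 ≤ k) (hreg : G.IsRegularOfDegree k) (e : Sym2 V) :
    (Finset.univ.filter (fun f => (conflictGraph G).Adj e f)).card ≤ 2 * k * (k - 1) := by
  classical
  by_cases he : e ∈ G.edgeSet
  · induction e with
    | _ u v =>
      have huv : G.Adj u v := (SimpleGraph.mem_edgeSet G).1 he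
      set A : Finset (Sym2 V) := ((G.neighborFinset u).erase v).image (fun w => s(u, w)) with hA
      set B : Finset (Sym2 V) := ((G.neighborFinset v).erase u).image (fun w => s(v, w)) with hB
      set C : Finset (Sym2 V) := ((G.neighborFinset u).erase v).biUnion
        (fun b => ((G.neighborFinset b).erase u).image (fun w => s(b, w))) with hC
      set D : Finset (Sym2 V) := ((G.neighborFinset v).erase u).biUnion
        (fun b => ((G.neighborFinset b).erase v).image (fun w => s(b, w))) with hD
      have hsub : (Finset.univ.filter (fun f => (conflictGraph G).Adj s(u,v) f)) ⊆ (A ∪ B) ∪ (C ∪ D) := by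
        intro f hf
        rw [Finset.mem_filter] at hf
        obtain ⟨-, -, hfE, hne, a, b, ha, hb, hab⟩ := hf
        by_cases hu : u ∈ f
        · obtain ⟨w, hw, rfl⟩ := edge_endpoint G hfE hu
          have hwv : w ≠ v := fun h => hne (by rw [h])
          refine Finset.mem_union_left _ (Finset.mem_union_left _ ?_)
          exact Finset.mem_image.2 ⟨w, Finset.mem_erase.2 ⟨hwv, by simpa using hw⟩, rfl⟩
        · by_cases hv : v ∈ f
          · obtain ⟨w, hw, rfl⟩ := edge_endpoint G hfE hv
            have hwu : w ≠ u := fun h => hne (by rw [h, Sym2.eq_swap])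
            refine Finset.mem_union_left _ (Finset.mem_union_right _ ?_)
            exact Finset.mem_image.2 ⟨w, Finset.mem_erase.2 ⟨hwu, by simpa using hw⟩, rfl⟩
          · have hbu : b ≠ u := fun h => hu (h ▸ hb)
            have hbv : b ≠ v := fun h => hv (h ▸ hb)
            rw [Sym2.mem_iff] at ha
            rcases hab with rfl | hadj
            · rcases ha with rfl | rfl
              · exact absurd rfl hbu
              · exact absurd rfl hbv
            · obtain ⟨w, hw, rfl⟩ := edge_endpoint G hfE hb
              have hwu : w ≠ u := fun h => hu (by rw [← h]; simp)
              have hwv : w ≠ v := fun h => hv (by rw [← h]; simp)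
              rcases ha with rfl | rfl
              · refine Finset.mem_union_right _ (Finset.mem_union_left _ ?_)
                refine Finset.mem_biUnion.2 ⟨b, Finset.mem_erase.2 ⟨hbv, by simpa using hadj⟩, ?_⟩
                exact Finset.mem_image.2 ⟨w, Finset.mem_erase.2 ⟨hwu, by simpa using hw⟩, rfl⟩
              · refine Finset.mem_union_right _ (Finset.mem_union_right _ ?_)
                refine Finset.mem_biUnion.2 ⟨b, Finset.mem_erase.2 ⟨hbu, by simpa using hadj⟩, ?_⟩
                exact Finset.mem_image.2 ⟨w, Finset.mem_erase.2 ⟨hwv, by simpa using hw⟩, rfl⟩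
      have cardNu : ∀ x, ((G.neighborFinset x).card = k) := hreg
      have cardErase : ∀ x y, y ∈ G.neighborFinset x → ((G.neighborFinset x).erase y).card = k - 1 := by
        intro x y hy
        rw [Finset.card_erase_of_mem hy, cardNu]
      have hAc : A.card ≤ k - 1 := by
        rw [hA]
        calc _ ≤ ((G.neighborFinset u).erase v).card := Finset.card_image_le
          _ = k - 1 := cardErase u v (by simpa using huv)
      have hBc : B.card ≤ k - 1 := by
        rw [hB]
        calc _ ≤ ((G.neighborFinset v).erase u).card := Finset.card_image_le
          _ = k - 1 := cardErase v u (by simpa using huv.symm)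
      have hCc : C.card ≤ (k - 1) * (k - 1) := by
        rw [hC]
        refine le_trans (Finset.card_biUnion_le_card_mul _ _ (k-1) ?_) ?_
        · intro b hb
          have hub : G.Adj u b := by
            have := Finset.mem_of_mem_erase hb
            simpa using this
          calc _ ≤ ((G.neighborFinset b).erase u).card := Finset.card_image_le
            _ = k - 1 := cardErase b u (by simpa using hub.symm)
        · rw [cardErase u v (by simpa using huv)]
      have hDc : D.card ≤ (k - 1) * (k - 1) := by
        rw [hD]
        refine le_trans (Finset.card_biUnion_le_card_mul _ _ (k-1) ?_) ?_
        · intro b hb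
          have hvb : G.Adj v b := by
            have := Finset.mem_of_mem_erase hb
            simpa using this
          calc _ ≤ ((G.neighborFinset b).erase v).card := Finset.card_image_le
            _ = k - 1 := cardErase b v (by simpa using hvb.symm)
        · rw [cardErase v u (by simpa using huv.symm)]
      calc (Finset.univ.filter (fun f => (conflictGraph G).Adj s(u,v) f)).card
          ≤ ((A ∪ B) ∪ (C ∪ D)).card := Finset.card_le_card hsub
        _ ≤ (A ∪ B).card + (C ∪ D).card := Finset.card_union_le _ _
        _ ≤ (A.card + B.card) + (C.card + D.card) :=
            Nat.add_le_add (Finset.card_union_le _ _) (Finset.card_union_le _ _)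
        _ ≤ ((k-1) + (k-1)) + ((k-1)*(k-1) + (k-1)*(k-1)) :=
            Nat.add_le_add (Nat.add_le_add hAc hBc) (Nat.add_le_add hCc hDc)
        _ ≤ 2 * k * (k - 1) := by
            obtain ⟨m, rfl⟩ : ∃ m, k = m + 1 := ⟨k - 1, by omega⟩
            simp only [Nat.add_sub_cancel]
            nlinarith
  · have : (Finset.univ.filter (fun f => (conflictGraph G).Adj e f)) = ∅ := by
      apply Finset.filter_false_of_mem
      intro f _ hadj
      exact he hadj.1
    simp [this]

theorem stmt4 {V : Type*} [Fintype V] (G : SimpleGraph V) [DecidableRel G.Adj]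
    (k : ℕ) (hk : 1 ≤ k) (hreg : G.IsRegularOfDegree k) :
    ∃ φ : Sym2 V → Fin (2 * k * (k - 1) + 1),
      ∀ e ∈ G.edgeSet, ∀ f ∈ G.edgeSet, e ≠ f →
        (∃ (u v : V) (p : G.Walk u v), p.IsPath ∧ p.length ≤ 3 ∧
          e ∈ p.edges ∧ f ∈ p.edges) → φ e ≠ φ f := by
  classical
  set σ : Sym2 V → ℕ := fun a => ((Fintype.equivFin (Sym2 V)) a : ℕ) with hσdef
  have hσ : Function.Injective σ := fun a b h =>
    (Fintype.equivFin (Sym2 V)).injective (Fin.val_injective h)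
  refine ⟨greedy (conflictGraph G) (2 * k * (k - 1)) σ, ?_⟩
  intro e he f hf hne ⟨u, v, p, _, hlen, hep, hfp⟩
  have hadj : (conflictGraph G).Adj e f :=
    ⟨he, hf, hne, conflict_of_path G p hlen hep hfp hne⟩
  exact greedy_valid (conflictGraph G) (2 * k * (k - 1)) σ hσ
    (fun a => conflict_degree_le G hk hreg a) e f hadj
end

section
/- Every finite simple graph with n vertices and m edges contains an independent set of size at least n² / (n + 2m) (equivalently, at least ⌈n²/(n+2m)⌉ when n ≥ 1). -/
open Finset SimpleGraph

private lemma turan_graph_edges (n r : ℕ) (hr : 0 < r) :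
    r * (2 * #(turanGraph n r).edgeFinset) + n * n ≤ r * (n * n) := by
  set c : ℕ → ℕ := fun j => #(Finset.univ.filter fun v : Fin n => (v : ℕ) % r = j) with hc
  have hmaps : ∀ v ∈ (Finset.univ : Finset (Fin n)), (v : ℕ) % r ∈ Finset.range r :=
    fun v _ => Finset.mem_range.2 (Nat.mod_lt _ hr)
  -- degree + fiber size = n
  have hdeg : ∀ v : Fin n, (turanGraph n r).degree v + c ((v : ℕ) % r) = n := by
    intro v
    have h1 : (turanGraph n r).degree v
        = #(Finset.univ.filter fun w : Fin n => ¬ ((w : ℕ) % r = (v : ℕ) % r)) := by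
      rw [← card_neighborFinset_eq_degree, neighborFinset_eq_filter]
      congr 1
      apply Finset.filter_congr
      intro w _
      simp only [turanGraph, ne_eq, eq_iff_iff]
      constructor
      · intro h h'; exact h h'.symm
      · intro h h'; exact h h'.symm
    have h2 := Finset.card_filter_add_card_filter_not
      (s := (Finset.univ : Finset (Fin n)))
      (p := fun w : Fin n => (w : ℕ) % r = (v : ℕ) % r)
    simp only [Finset.card_univ, Fintype.card_fin] at h2
    have h3 : c ((v : ℕ) % r)
        = #(Finset.univ.filter fun w : Fin n => (w : ℕ) % r = (v : ℕ) % r) := rfl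
    omega
  -- sum over vertices
  have hsum : 2 * #(turanGraph n r).edgeFinset + ∑ v : Fin n, c ((v : ℕ) % r) = n * n := by
    rw [← sum_degrees_eq_twice_card_edges, ← Finset.sum_add_distrib]
    calc ∑ v : Fin n, ((turanGraph n r).degree v + c ((v : ℕ) % r))
        = ∑ _v : Fin n, n := Finset.sum_congr rfl (fun v _ => hdeg v)
      _ = n * n := by simp [Finset.sum_const, Nat.mul_comm]
  -- fiberwise
  have hfib : ∑ v : Fin n, c ((v : ℕ) % r) = ∑ j ∈ Finset.range r, c j * c j := by
    rw [← Finset.sum_fiberwise_of_maps_to hmaps (fun v : Fin n => c ((v : ℕ) % r))]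
    apply Finset.sum_congr rfl
    intro j _
    have : ∀ v ∈ Finset.univ.filter (fun v : Fin n => (v : ℕ) % r = j),
        c ((v : ℕ) % r) = c j := by
      intro v hv
      rw [(Finset.mem_filter.1 hv).2]
    rw [Finset.sum_congr rfl this, Finset.sum_const, smul_eq_mul]
  have hn : n = ∑ j ∈ Finset.range r, c j := by
    have := Finset.card_eq_sum_card_fiberwise hmaps
    simpa using this
  -- Cauchy–Schwarz
  have hcs : n * n ≤ r * ∑ j ∈ Finset.range r, c j * c j := by
    have h := sq_sum_le_card_mul_sum_sq (s := Finset.range r) (f := fun j => (c j : ℤ))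
    have h2 : ((n : ℤ)) ^ 2 ≤ (r : ℤ) * ∑ j ∈ Finset.range r, (c j : ℤ) ^ 2 := by
      rw [hn]; push_cast; simpa using h
    have h3 : ((n * n : ℕ) : ℤ) ≤ ((r * ∑ j ∈ Finset.range r, c j * c j : ℕ) : ℤ) := by
      push_cast
      calc ((n : ℤ)) * n = (n : ℤ) ^ 2 := by ring
        _ ≤ (r : ℤ) * ∑ j ∈ Finset.range r, (c j : ℤ) ^ 2 := h2
        _ = (r : ℤ) * ∑ j ∈ Finset.range r, (c j : ℤ) * c j := by
            congr 1; apply Finset.sum_congr rfl; intro j _; ring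
    exact_mod_cast h3
  calc r * (2 * #(turanGraph n r).edgeFinset) + n * n
      ≤ r * (2 * #(turanGraph n r).edgeFinset) + r * ∑ j ∈ Finset.range r, c j * c j := by
        omega
    _ = r * (2 * #(turanGraph n r).edgeFinset + ∑ v : Fin n, c ((v : ℕ) % r)) := by
        rw [hfib, Nat.mul_add]
    _ = r * (n * n) := by rw [hsum]

private lemma turan_numeric {V : Type*} [Fintype V] [DecidableEq V] (G : SimpleGraph V)
    [DecidableRel G.Adj] {r : ℕ} (hr : 0 < r) (h : G.CliqueFree (r + 1)) :
    r * (2 * #G.edgeFinset) + Fintype.card V * Fintype.card V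
      ≤ r * (Fintype.card V * Fintype.card V) := by
  obtain ⟨H, hd, hH⟩ := exists_isTuranMaximal (V := V) hr
  have h1 : #G.edgeFinset ≤ #H.edgeFinset := hH.2 h
  obtain ⟨f⟩ := hH.nonempty_iso_turanGraph
  have h2 : #H.edgeFinset = #(turanGraph (Fintype.card V) r).edgeFinset :=
    f.card_edgeFinset_eq
  have h3 := turan_graph_edges (Fintype.card V) r hr
  have : r * (2 * #G.edgeFinset) ≤ r * (2 * #(turanGraph (Fintype.card V) r).edgeFinset) := by
    apply Nat.mul_le_mul_left
    omega
  omega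

theorem stmt5 {V : Type*} [Fintype V] [DecidableEq V] (G : SimpleGraph V)
    [DecidableRel G.Adj] (hn : 1 ≤ Fintype.card V) :
    ∃ s : Finset V, (∀ v ∈ s, ∀ w ∈ s, v ≠ w → ¬ G.Adj v w) ∧
      (Fintype.card V) ^ 2 ≤ (Fintype.card V + 2 * G.edgeFinset.card) * s.card := by
  classical
  set n := Fintype.card V with hndef
  set indep : Finset (Finset V) :=
    Finset.univ.filter (fun s : Finset V => ∀ v ∈ s, ∀ w ∈ s, v ≠ w → ¬ G.Adj v w) with hindep
  have hne : indep.Nonempty := by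
    obtain ⟨v⟩ := Fintype.card_pos_iff.1 hn
    exact ⟨{v}, by simp [hindep]⟩
  obtain ⟨s, hs, hmax⟩ := Finset.exists_max_image indep Finset.card hne
  have hsind : ∀ v ∈ s, ∀ w ∈ s, v ≠ w → ¬ G.Adj v w := by
    rw [hindep] at hs; exact (Finset.mem_filter.1 hs).2
  refine ⟨s, hsind, ?_⟩
  set k := #s with hk
  have hk1 : 1 ≤ k := by
    obtain ⟨v⟩ := Fintype.card_pos_iff.1 hn
    have : ({v} : Finset V) ∈ indep := by simp [hindep]
    have := hmax _ this
    simpa using this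
  -- complement is cliquefree
  have hcf : Gᶜ.CliqueFree (k + 1) := by
    intro t ht
    have htind : t ∈ indep := by
      rw [hindep, Finset.mem_filter]
      refine ⟨Finset.mem_univ _, fun v hv w hw hvw => ?_⟩
      have := ht.1 (Finset.mem_coe.2 hv) (Finset.mem_coe.2 hw) hvw
      rw [compl_adj] at this
      exact this.2
    have := hmax _ htind
    rw [ht.2] at this
    omega
  have hturan := turan_numeric Gᶜ (show 0 < k by omega) hcf
  -- edge counts of G and Gᶜ
  have hcompl : 2 * #G.edgeFinset + 2 * #Gᶜ.edgeFinset + n = n * n := by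
    have h1 := sum_degrees_eq_twice_card_edges G
    have h2 := sum_degrees_eq_twice_card_edges Gᶜ
    have h3 : ∀ v : V, G.degree v + Gᶜ.degree v + 1 = n := by
      intro v
      have := G.degree_compl (v := v)
      have hlt := G.degree_lt_card_verts v
      omega
    have h4 : ∑ v : V, (G.degree v + Gᶜ.degree v + 1) = n * n := by
      calc ∑ v : V, (G.degree v + Gᶜ.degree v + 1) = ∑ _v : V, n :=
            Finset.sum_congr rfl (fun v _ => h3 v)
        _ = n * n := by simp [Finset.sum_const, hndef, Nat.mul_comm]
    rw [← h1, ← h2, ← h4]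
    rw [Finset.sum_add_distrib, Finset.sum_add_distrib]
    simp [hndef, Finset.card_univ]
  -- final algebra
  set m := #G.edgeFinset
  set mc := #Gᶜ.edgeFinset
  have key : k * (2 * mc) + n * n ≤ k * (n * n) := hturan
  have expand : k * (n * n) = k * (2 * m) + k * (2 * mc) + k * n := by
    rw [← hcompl]; ring
  have : n * n ≤ k * (2 * m) + k * n := by omega
  calc n ^ 2 = n * n := sq n
    _ ≤ k * (2 * m) + k * n := this
    _ = (n + 2 * m) * k := by ring
end
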